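/- Let A be a set of infinite regular cardinals and λ a regular cardinal with λ ∈ spec(A). Then either λ ≤ cf(∏A/J_bd), or there exists ā < sup(A) such that λ ∈ spec({a ∈ A : a ≤ ā}). In particular, if λ ∈ spec*(A), then λ ≤ cf(∏A/J_bd). -/

import Mathlib

universe u

open Cardinal Set

namespace TukeySpec

/-- A subset `S` of a preorder is cofinal if every element has an upper bound in `S`. -/
def IsCofinal {P : Type*} [Preorder P] (S : Set P) : Prop :=
  ∀ p : P, ∃ s ∈ S, p ≤ s

/-- `Q` is a Tukey quotient of `P` (i.e. `P ≥_T Q`): there is a map `P → Q`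
sending cofinal sets to cofinal sets. -/
def TukeyQuot (P : Type*) (Q : Type*) [Preorder P] [Preorder Q] : Prop :=
  ∃ φ : P → Q, ∀ S : Set P, IsCofinal S → IsCofinal (φ '' S)

/-- `P` has calibre `(κ, l, m)`. -/
def Calibre (P : Type u) [Preorder P] (κ l m : Cardinal.{u}) : Prop :=
  ∀ P' : Set P, #P' = κ → ∃ R ⊆ P', #R = l ∧ ∀ B ⊆ R, #B = m → BddAbove B

/-- `P` has calibre `κ` (the simplified form): every `κ`-sized subset has a
`κ`-sized subset which is bounded in `P`. -/
def CalibreSimple (P : Type u) [Preorder P] (κ : Cardinal.{u}) : Prop :=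
  ∀ P' : Set P, #P' = κ → ∃ R ⊆ P', #R = κ ∧ BddAbove R

/-- The Tukey spectrum of a poset: all regular cardinals `κ` with `P ≥_T κ`,
where `κ` carries its usual (ordinal) ordering. -/
def specPoset (P : Type u) [Preorder P] : Set Cardinal.{u} :=
  {κ | κ.IsRegular ∧ TukeyQuot P ↥(Set.Iio κ.ord)}

/-- The product `∏A` of a set of cardinals: all functions on `A` with
`f a < a` (as ordinals). -/
def piSet (A : Set Cardinal.{0}) : Set (↥A → Ordinal.{0}) :=
  {f | ∀ a : ↥A, f a < (a : Cardinal).ord}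

/-- A family of members of `∏A` is bounded if it has an upper bound in `(∏A, ≤)`
(pointwise order). -/
def BddIn (A : Set Cardinal.{0}) (S : Set (↥A → Ordinal.{0})) : Prop :=
  ∃ h ∈ piSet A, ∀ f ∈ S, ∀ a : ↥A, f a ≤ h a

/-- The Tukey spectrum of a set `A` of regular cardinals: all regular `κ` for which
there is a `κ`-sized family `F ⊆ ∏A` all of whose `κ`-sized subfamilies are
unbounded in `(∏A, ≤)`. -/
def spec (A : Set Cardinal.{0}) : Set Cardinal.{0} :=
  {κ | κ.IsRegular ∧ ∃ F ⊆ piSet A, #F = Cardinal.lift.{1} κ ∧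
    ∀ F₀ ⊆ F, #F₀ = Cardinal.lift.{1} κ → ¬ BddIn A F₀}

/-- `cf(∏A/D)`: the least cardinality of a subset of `∏A` which is cofinal
modulo the ultrafilter `D`. -/
noncomputable def cofUlt (A : Set Cardinal.{0}) (D : Ultrafilter ↥A) : Cardinal.{1} :=
  sInf {c : Cardinal.{1} | ∃ S ⊆ piSet A, #S = c ∧
    ∀ f ∈ piSet A, ∃ g ∈ S, {a : ↥A | f a ≤ g a} ∈ D}

/-- `pcf(A)`: the set of all cofinalities `cf(∏A/D)` as `D` ranges over
ultrafilters on `A`. -/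
def pcf (A : Set Cardinal.{0}) : Set Cardinal.{0} :=
  {κ | ∃ D : Ultrafilter ↥A, Cardinal.lift.{1} κ = cofUlt A D}

/-- `ub(F)`: the set of coordinates `a ∈ A` where the family `F` is unbounded. -/
def ub (A : Set Cardinal.{0}) (F : Set (↥A → Ordinal.{0})) : Set ↥A :=
  {a | ∀ β < (a : Cardinal).ord, ∃ f ∈ F, β < f a}

/-- The strong part of the Tukey spectrum: `l ∈ spec*(A)` iff there is an
`l`-sized family `F ⊆ ∏A` such that every `l`-sized subfamily has a set of
unbounded coordinates which is unbounded in `sup A`. -/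
def specStarMem (A : Set Cardinal.{0}) (l : Cardinal.{0}) : Prop :=
  l.IsRegular ∧ ∃ F ⊆ piSet A, #F = Cardinal.lift.{1} l ∧
    ∀ F₀ ⊆ F, #F₀ = Cardinal.lift.{1} l →
      ∀ β < sSup A, ∃ a ∈ ub A F₀, β < (a : Cardinal)

/-- `κ` is a limit point of the set `X` of cardinals. -/
def IsLimitPt (X : Set Cardinal.{0}) (κ : Cardinal.{0}) : Prop :=
  ∀ β < κ, ∃ x ∈ X, β < x ∧ x < κ

/-- `C` is a closed unbounded subset of `κ`. -/
def IsClubIn (C : Set Ordinal.{0}) (κ : Ordinal.{0}) : Prop :=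
  C ⊆ Set.Iio κ ∧ (∀ β < κ, ∃ o ∈ C, β < o) ∧
    ∀ β < κ, β ≠ 0 → (∀ γ < β, ∃ o ∈ C, γ < o ∧ o < β) → β ∈ C

/-- A set `S` of cardinals is stationary in `κ`: it meets every club of `κ`. -/
def StatIn (S : Set Cardinal.{0}) (κ : Cardinal.{0}) : Prop :=
  ∀ C : Set Ordinal.{0}, IsClubIn C κ.ord → ∃ a ∈ S, a.ord ∈ C

/-- `κ` is Mahlo: strongly inaccessible and the regular cardinals below `κ`
are stationary in `κ`. -/
def IsMahlo (κ : Cardinal.{0}) : Prop :=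
  κ.IsInaccessible ∧ StatIn {a | a < κ ∧ a.IsRegular} κ

/-- `κ` is weakly compact: strongly inaccessible and `κ → (κ)²₂`. -/
def IsWeaklyCompact (κ : Cardinal.{0}) : Prop :=
  κ.IsInaccessible ∧
    ∀ c : Ordinal.{0} → Ordinal.{0} → Bool,
      ∃ H ⊆ Set.Iio κ.ord, #H = Cardinal.lift.{1} κ ∧
        ∃ b : Bool, ∀ α ∈ H, ∀ β ∈ H, α < β → c α β = b

/-- `θ` carries a Jónsson algebra: there is `F` from finite subsets of `θ` to `θ`
such that `F` applied to finite subsets of any `θ`-sized `H ⊆ θ` covers `θ`. -/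
def CarriesJonsson (θ : Cardinal.{0}) : Prop :=
  ∃ F : Finset Ordinal.{0} → Ordinal.{0},
    (∀ s : Finset Ordinal.{0}, (↑s : Set Ordinal) ⊆ Set.Iio θ.ord → F s < θ.ord) ∧
    ∀ H ⊆ Set.Iio θ.ord, #H = Cardinal.lift.{1} θ →
      ∀ γ < θ.ord, ∃ s : Finset Ordinal.{0}, (↑s : Set Ordinal) ⊆ H ∧ F s = γ

/-- `cf(∏A/J_bd)`: the least cardinality of a subset of `∏A` cofinal modulo
the ideal of bounded subsets of `A`. -/
noncomputable def cofJbd (A : Set Cardinal.{0}) : Cardinal.{1} :=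
  sInf {c : Cardinal.{1} | ∃ S ⊆ piSet A, #S = c ∧
    ∀ f ∈ piSet A, ∃ g ∈ S, ∃ b < sSup A, ∀ a : ↥A, b < (a : Cardinal) → f a ≤ g a}

/-- `μ` is a limit cardinal. -/
def IsLimitCard (μ : Cardinal.{0}) : Prop :=
  ℵ₀ ≤ μ ∧ ∀ ν < μ, Order.succ ν < μ

/-- For a regular cardinal `l`: if `l ∈ spec(A)` then either
`l ≤ cf(∏A/J_bd)` or `l ∈ spec({a ∈ A : a ≤ b})` for some `b < sup A`; and
if `l ∈ spec*(A)` then `l ≤ cf(∏A/J_bd)`. -/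
lemma isRegular_lift {l : Cardinal.{0}} (h : l.IsRegular) :
    (Cardinal.lift.{1} l).IsRegular := by
  constructor
  · rw [← Cardinal.lift_aleph0.{1,0}]; exact Cardinal.lift_le.mpr h.1
  · rw [← Cardinal.lift_ord, ← Ordinal.lift_cof]
    exact (Cardinal.lift_le.mpr h.2).trans_eq rfl

lemma pigeon {α ι : Type u} {T : Set α} {κ : Cardinal.{u}} (hκ : κ.IsRegular)
    (hT : #T = κ) (m : T → ι) {I : Set ι} (hI : #I < κ) (hm : ∀ t, m t ∈ I) :
    ∃ i : ι, #(m ⁻¹' {i}) = κ := by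
  by_contra h
  push_neg at h
  have hfib : ∀ i : ι, #(m ⁻¹' {i}) < κ := by
    intro i
    exact lt_of_le_of_ne ((Cardinal.mk_set_le _).trans_eq hT) (h i)
  have hcover : (univ : Set ↥T) = ⋃ i : ↥I, m ⁻¹' {(i : ι)} := by
    ext t
    simp only [mem_univ, true_iff, mem_iUnion, mem_preimage, mem_singleton_iff]
    exact ⟨⟨m t, hm t⟩, rfl⟩
  have h1 : κ ≤ #I * ⨆ i : ↥I, #(m ⁻¹' {(i : ι)}) := by
    calc κ = #T := hT.symm
    _ = #(univ : Set ↥T) := by rw [Cardinal.mk_univ]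
    _ = #(⋃ i : ↥I, m ⁻¹' {(i : ι)}) := by rw [hcover]
    _ ≤ #I * ⨆ i : ↥I, #(m ⁻¹' {(i : ι)}) := Cardinal.mk_iUnion_le _
  have h2 : #I * (⨆ i : ↥I, #(m ⁻¹' {(i : ι)})) < κ :=
    Cardinal.mul_lt_of_lt hκ.1 hI
      (Cardinal.iSup_lt_of_isRegular hκ hI fun i => hfib _)
  exact absurd (h1.trans_lt h2) (lt_irrefl κ)


lemma core (A : Set Cardinal.{0}) (hA : ∀ a ∈ A, a.IsRegular) (hbdd : BddAbove A)
    (hne : A.Nonempty) {l : Cardinal.{0}} (hreg : l.IsRegular)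
    (hcof : ¬ Cardinal.lift.{1} l ≤ cofJbd A)
    {F : Set (↥A → Ordinal.{0})} (hFsub : F ⊆ piSet A)
    (hFcard : #F = Cardinal.lift.{1} l) :
    ∃ g ∈ piSet A, ∃ b < sSup A, ∃ F'' ⊆ F, #F'' = Cardinal.lift.{1} l ∧
      ∀ f ∈ F'', ∀ a : ↥A, b < (a : Cardinal) → f a ≤ g a := by
  have hreg' : (Cardinal.lift.{1} l).IsRegular := isRegular_lift hreg
  have hω : ∀ a : ↥A, ℵ₀ ≤ (a : Cardinal) := fun a => (hA a a.2).1
  obtain ⟨a₀, ha₀⟩ := hne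
  have hσpos : 0 < sSup A :=
    lt_of_lt_of_le aleph0_pos ((hA a₀ ha₀).1.trans (le_csSup hbdd ha₀))
  -- obtain a witnessing cofinal family S of minimal cardinality
  have hmem : cofJbd A ∈ {c : Cardinal.{1} | ∃ S ⊆ piSet A, #S = c ∧
      ∀ f ∈ piSet A, ∃ g ∈ S, ∃ b < sSup A, ∀ a : ↥A, b < (a : Cardinal) → f a ≤ g a} := by
    apply csInf_mem
    exact ⟨#(piSet A), piSet A, Subset.rfl, rfl,
      fun f hf => ⟨f, hf, 0, hσpos, fun a _ => le_rfl⟩⟩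
  obtain ⟨S, hSsub, hScard, hScof⟩ := hmem
  have hSlt : #S < Cardinal.lift.{1} l := by rw [hScard]; exact not_le.mp hcof
  obtain ⟨κ₀, hκ₀⟩ := Cardinal.mem_range_lift_of_le hSlt.le
  have hκ₀l : κ₀ < l := by
    rw [← Cardinal.lift_lt.{0,1}]; rw [hκ₀]; exact hSlt
  -- diagonal argument: sSup A ≤ κ₀
  have hσκ : sSup A ≤ κ₀ := by
    by_contra hlt
    push_neg at hlt
    have hE : Nonempty (Quotient.out κ₀ ≃ ↥S) := by
      rw [← Cardinal.lift_mk_eq'.{0,1}]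
      simpa [Cardinal.mk_out] using hκ₀
    obtain ⟨e⟩ := hE
    set fstar : ↥A → Ordinal.{0} := fun a =>
      if κ₀ < (a : Cardinal) then ⨆ i : Quotient.out κ₀, ((e i : ↥A → Ordinal.{0}) a + 1)
      else 0 with hfstar
    have hfs : fstar ∈ piSet A := by
      intro a
      by_cases hc : κ₀ < (a : Cardinal)
      · rw [hfstar]; simp only [if_pos hc]
        apply Ordinal.iSup_lt_ord
        · rw [Cardinal.mk_out, (hA a a.2).cof_eq]; exact hc
        · intro i
          have h1 : ((e i : ↥A → Ordinal.{0})) a < (a : Cardinal).ord := hSsub (e i).2 a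
          rw [Ordinal.add_one_eq_succ]
          exact (Cardinal.isSuccLimit_ord (hω a)).succ_lt h1
      · rw [hfstar]; simp only [if_neg hc]
        exact (Cardinal.isSuccLimit_ord (hω a)).pos
    obtain ⟨g, hg, b, hb, hdom⟩ := hScof fstar hfs
    have hcσ : max b κ₀ < sSup A := max_lt hb hlt
    obtain ⟨a, haA, hca⟩ := exists_lt_of_lt_csSup ⟨a₀, ha₀⟩ hcσ
    set a' : ↥A := ⟨a, haA⟩
    have h1 : b < (a' : Cardinal) := lt_of_le_of_lt (le_max_left _ _) hca
    have h2 : κ₀ < (a' : Cardinal) := lt_of_le_of_lt (le_max_right _ _) hca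
    have hle : fstar a' ≤ g a' := hdom a' h1
    have hgt : g a' + 1 ≤ fstar a' := by
      rw [hfstar]; simp only [if_pos h2]
      have := le_ciSup (Ordinal.bddAbove_range
        (fun i : Quotient.out κ₀ => ((e i : ↥A → Ordinal.{0}) a' + 1))) (e.symm ⟨g, hg⟩)
      simpa using this
    have : g a' < g a' := lt_of_lt_of_le (lt_of_lt_of_le
      (by rw [Ordinal.add_one_eq_succ]; exact Order.lt_succ _) hgt) hle
    exact absurd this (lt_irrefl _)
  have hσl : sSup A < l := lt_of_le_of_lt hσκ hκ₀l
  -- choose dominating members of S and bounds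
  have hchoice : ∀ f : ↥F, ∃ g : ↥S, ∃ b : Cardinal.{0}, b < sSup A ∧
      ∀ a : ↥A, b < (a : Cardinal) → (f : ↥A → Ordinal.{0}) a ≤ (g : ↥A → Ordinal.{0}) a := by
    intro f
    obtain ⟨g, hg, b, hb, hd⟩ := hScof f.1 (hFsub f.2)
    exact ⟨⟨g, hg⟩, b, hb, hd⟩
  choose G B hB hd using hchoice
  -- pigeonhole 1: common g
  have hI1 : #(univ : Set ↥S) < Cardinal.lift.{1} l := by
    rw [Cardinal.mk_univ]; exact hSlt
  obtain ⟨s, hs⟩ := pigeon hreg' hFcard G hI1 (fun t => mem_univ _)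
  -- pigeonhole 2: common b
  set P : Set ↥F := G ⁻¹' {s} with hP
  have hPcard : #P = Cardinal.lift.{1} l := hs
  have hI2 : #(Iio (sSup A) : Set Cardinal.{0}) < Cardinal.lift.{1} l := by
    have hinj : Function.Injective (fun c : ↥(Iio (sSup A)) =>
        (⟨(c : Cardinal).ord, Cardinal.ord_lt_ord.mpr c.2⟩ : ↥(Iio (sSup A).ord))) := by
      intro x y hxy
      apply Subtype.ext
      have := congrArg Subtype.val hxy
      simpa [Cardinal.ord_injective.eq_iff] using this
    have h1 : #(Iio (sSup A) : Set Cardinal.{0}) ≤ #(Iio (sSup A).ord : Set Ordinal.{0}) :=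
      Cardinal.mk_le_of_injective hinj
    have h2 : #(Iio (sSup A).ord : Set Ordinal.{0}) = Cardinal.lift.{1} (sSup A) := by
      rw [Ordinal.mk_Iio_ordinal, Cardinal.card_ord]
    exact (h1.trans_eq h2).trans_lt (Cardinal.lift_lt.mpr hσl)
  obtain ⟨b, hb⟩ := pigeon hreg' hPcard (fun p : ↥P => B p.1) hI2
    (fun p => mem_Iio.mpr (hB p.1))
  set fib : Set ↥P := (fun p : ↥P => B p.1) ⁻¹' {b} with hfib
  have hbne : fib.Nonempty := by
    rw [← Set.nonempty_coe_sort, ← Cardinal.mk_ne_zero_iff, hb]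
    exact (aleph0_pos.trans_le hreg'.1).ne'
  obtain ⟨p₀, hp₀⟩ := hbne
  have hbσ : b < sSup A := by
    have h1 : B p₀.1 = b := hp₀
    rw [← h1]; exact hB p₀.1
  have hinjv : Function.Injective (fun p : ↥P => (p.1 : ↥A → Ordinal.{0})) := by
    intro x y hxy
    exact Subtype.ext (Subtype.ext hxy)
  refine ⟨s.1, hSsub s.2, b, hbσ, (fun p : ↥P => (p.1 : ↥A → Ordinal.{0})) '' fib, ?_, ?_, ?_⟩
  · rintro f ⟨p, _, rfl⟩
    exact p.1.2
  · rw [Cardinal.mk_image_eq hinjv, hb]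
  · rintro f ⟨p, hpf, rfl⟩ a ha
    have h1 : B p.1 = b := hpf
    have h2 : G p.1 = s := p.2
    have h3 := hd p.1 a (by rw [h1]; exact ha)
    rwa [h2] at h3


theorem statement19 (A : Set Cardinal.{0}) (hA : ∀ a ∈ A, a.IsRegular)
    (hbdd : BddAbove A) (l : Cardinal.{0}) (hreg : l.IsRegular) :
    (l ∈ spec A →
      Cardinal.lift.{1} l ≤ cofJbd A ∨ ∃ b < sSup A, l ∈ spec {a ∈ A | a ≤ b}) ∧
    (specStarMem A l → Cardinal.lift.{1} l ≤ cofJbd A) := by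
  rcases Set.eq_empty_or_nonempty A with hAe | hne
  · subst hAe
    have hempty : ∀ F : Set (↥(∅ : Set Cardinal.{0}) → Ordinal.{0}),
        #F ≠ Cardinal.lift.{1} l := by
      intro F hF
      have hsub : F.Subsingleton := fun f _ g _ =>
        funext fun x => absurd x.2 (Set.notMem_empty _)
      have h1 : #F ≤ 1 := Cardinal.mk_le_one_iff_set_subsingleton.mpr hsub
      rw [hF] at h1
      exact absurd h1 (not_le.mpr (one_lt_aleph0.trans_le (isRegular_lift hreg).1))
    constructor
    · rintro ⟨-, F, -, hFc, -⟩
      exact absurd hFc (hempty F)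
    · rintro ⟨-, F, -, hFc, -⟩
      exact absurd hFc (hempty F)
  constructor
  · intro hspec
    by_cases hc : Cardinal.lift.{1} l ≤ cofJbd A
    · exact Or.inl hc
    obtain ⟨-, F, hFsub, hFcard, hunb⟩ := hspec
    obtain ⟨g, hg, b, hbσ, F'', hF''F, hF''card, hdom⟩ :=
      core A hA hbdd hne hreg hc hFsub hFcard
    refine Or.inr ⟨b, hbσ, hreg, ?_⟩
    set A' : Set Cardinal.{0} := {a ∈ A | a ≤ b} with hA'
    set r : (↥A → Ordinal.{0}) → (↥A' → Ordinal.{0}) :=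
      fun f x => f ⟨x.1, x.2.1⟩ with hr
    have hval : Function.Injective (fun p : ↥F'' => (p : ↥A → Ordinal.{0})) :=
      fun x y h => Subtype.ext h
    refine ⟨r '' F'', ?_, ?_, ?_⟩
    · rintro t ⟨f, hf, rfl⟩ x
      exact hFsub (hF''F hf) ⟨x.1, x.2.1⟩
    · apply le_antisymm
      · rw [← hF''card]; exact Cardinal.mk_image_le
      · by_contra hlt2
        push_neg at hlt2
        obtain ⟨t₀, ht₀⟩ := pigeon (isRegular_lift hreg) hF''card
          (fun p : ↥F'' => r p.1) hlt2 (fun p => Set.mem_image_of_mem _ p.2)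
        have hne2 : ((fun p : ↥F'' => r p.1) ⁻¹' {t₀}).Nonempty := by
          rw [← Set.nonempty_coe_sort, ← Cardinal.mk_ne_zero_iff, ht₀]
          exact (aleph0_pos.trans_le (isRegular_lift hreg).1).ne'
        obtain ⟨p₀, hp₀⟩ := hne2
        set T₀ : Set (↥A → Ordinal.{0}) := (fun p : ↥F'' => (p : ↥A → Ordinal.{0})) ''
          ((fun p : ↥F'' => r p.1) ⁻¹' {t₀}) with hT₀
        have hT₀sub : T₀ ⊆ F := by rintro f ⟨p, -, rfl⟩; exact hF''F p.2
        have hT₀card : #T₀ = Cardinal.lift.{1} l := by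
          rw [Cardinal.mk_image_eq hval, ht₀]
        apply hunb T₀ hT₀sub hT₀card
        refine ⟨fun a => max (p₀.1 a) (g a), ?_, ?_⟩
        · intro a; exact max_lt (hFsub (hF''F p₀.2) a) (hg a)
        · rintro f ⟨p, hpf, rfl⟩ a
          by_cases hba : b < (a : Cardinal)
          · exact (hdom p.1 p.2 a hba).trans (le_max_right _ _)
          · have hxA' : (a : Cardinal) ∈ A' := ⟨a.2, not_lt.mp hba⟩
            have h1 : r p.1 ⟨a.1, hxA'⟩ = r p₀.1 ⟨a.1, hxA'⟩ := by
              rw [show r p.1 = t₀ from hpf, show r p₀.1 = t₀ from hp₀]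
            have h2 : p.1 a = p₀.1 a := h1
            exact h2.le.trans (le_max_left _ _)
    · intro G₀ hsub₀ hcard₀ hbdd₀
      obtain ⟨h', hh', hbd'⟩ := hbdd₀
      set F₀ : Set (↥A → Ordinal.{0}) := {f ∈ F'' | r f ∈ G₀} with hF₀
      have hF₀sub : F₀ ⊆ F := fun f hf => hF''F hf.1
      have hF₀card : #F₀ = Cardinal.lift.{1} l := by
        apply le_antisymm
        · rw [← hF''card]
          exact Cardinal.mk_le_mk_of_subset (sep_subset _ _)
        · rw [← hcard₀]
          have himg : G₀ ⊆ r '' F₀ := by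
            intro t ht
            obtain ⟨f, hf, rfl⟩ := hsub₀ ht
            exact ⟨f, ⟨hf, ht⟩, rfl⟩
          exact (Cardinal.mk_le_mk_of_subset himg).trans Cardinal.mk_image_le
      apply hunb F₀ hF₀sub hF₀card
      refine ⟨fun a => if hc2 : (a : Cardinal) ≤ b then
          max (h' ⟨a.1, ⟨a.2, hc2⟩⟩) (g a) else g a, ?_, ?_⟩
      · intro a
        by_cases hc2 : (a : Cardinal) ≤ b
        · simp only [dif_pos hc2]
          exact max_lt (hh' ⟨a.1, ⟨a.2, hc2⟩⟩) (hg a)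
        · simp only [dif_neg hc2]; exact hg a
      · intro f hf a
        by_cases hc2 : (a : Cardinal) ≤ b
        · simp only [dif_pos hc2]
          exact le_trans (hbd' (r f) hf.2 ⟨a.1, ⟨a.2, hc2⟩⟩) (le_max_left _ _)
        · simp only [dif_neg hc2]
          exact hdom f hf.1 a (not_le.mp hc2)
  · intro hst
    by_contra hc
    obtain ⟨-, F, hFsub, hFcard, hub⟩ := hst
    obtain ⟨g, hg, b, hbσ, F'', hF''F, hF''card, hdom⟩ :=
      core A hA hbdd hne hreg hc hFsub hFcard
    obtain ⟨a, hau, hba⟩ := hub F'' hF''F hF''card b hbσ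
    obtain ⟨f, hf, hgf⟩ := hau (g a) (hg a)
    exact absurd (hdom f hf a hba) (not_le.mpr hgf)

end TukeySpec
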